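/- For the quadratic nonlinearity u² on 𝕋²: for a large integer N, let û_N(n,τ) = 1_{n=Ne₁}1_{[-1,1]}(τ+N²) and v̂_N(n,τ) = 1_{n=Ne₂}1_{[-1,1]}(τ+N²), where e₁=(1,0), e₂=(0,1). Then the space-time Fourier transform of the product satisfies 𝓕(u_N v_N)(n,τ) = 1_{n=N(e₁+e₂)} · max{0, min{2-τ-2N², 2+τ+2N²}} ≥ 1_{n=N(e₁+e₂)} 1_{[-1,1]}(τ+2N²). Consequently, for any s, b ∈ ℝ: ‖u_N‖_{X^{s,b}} ∼ N^s, ‖v_N‖_{X^{s,b}} ∼ N^s, and ‖⟨n⟩^s⟨τ+|n|²⟩^{b-1} 𝓕(u_N v_N)‖_{ℓ²_n L²_τ} ∼ N^s (with implicit constants independent of N). -/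

import Mathlib

open MeasureTheory

noncomputable def jap (n : ℤ × ℤ) : ℝ := Real.sqrt (1 + ((n.1 : ℝ) ^ 2 + (n.2 : ℝ) ^ 2))

noncomputable def nsq (n : ℤ × ℤ) : ℝ := (n.1 : ℝ) ^ 2 + (n.2 : ℝ) ^ 2

noncomputable def jb (x : ℝ) : ℝ := Real.sqrt (1 + x ^ 2)

noncomputable def Xnorm (s b : ℝ) (u : ℤ × ℤ → ℝ → ℂ) : ℝ :=
  Real.sqrt (∑' n : ℤ × ℤ, ∫ τ : ℝ, (jap n ^ s * jb (τ + nsq n) ^ b * ‖u n τ‖) ^ 2)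

noncomputable def conv (u v : ℤ × ℤ → ℝ → ℂ) : ℤ × ℤ → ℝ → ℂ :=
  fun n τ => ∑' n₁ : ℤ × ℤ, ∫ τ₁ : ℝ, u n₁ τ₁ * v (n - n₁) (τ - τ₁)

/-- `û_N(n,τ) = 1_{n = N e₁} 1_{[-1,1]}(τ + N²)`. -/
noncomputable def uN (N : ℕ) : ℤ × ℤ → ℝ → ℂ :=
  fun n τ => if n = ((N : ℤ), 0) then
    ((Set.indicator (Set.Icc (-1 : ℝ) 1) (fun _ => (1 : ℝ)) (τ + (N : ℝ) ^ 2) : ℝ) : ℂ)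
  else 0

/-- `v̂_N(n,τ) = 1_{n = N e₂} 1_{[-1,1]}(τ + N²)`. -/
noncomputable def vN (N : ℕ) : ℤ × ℤ → ℝ → ℂ :=
  fun n τ => if n = (0, (N : ℤ)) then
    ((Set.indicator (Set.Icc (-1 : ℝ) 1) (fun _ => (1 : ℝ)) (τ + (N : ℝ) ^ 2) : ℝ) : ℂ)
  else 0


open Set

lemma tri_eq (x t : ℝ) :
    max (min (1 - t) (x - t + 1) - max (-1 - t) (x - t - 1)) 0
      = max 0 (min (2 - x) (2 + x)) := by
  have l1 : min (1 - t) (x - t + 1) = min 1 (x + 1) - t := by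
    rw [show x - t + 1 = (x + 1) - t by ring, min_sub_sub_right]
  have l2 : max (-1 - t) (x - t - 1) = max (-1) (x - 1) - t := by
    rw [show x - t - 1 = (x - 1) - t by ring, show (-1 : ℝ) - t = -1 - t from rfl,
      max_sub_sub_right]
  rw [l1, l2, show min 1 (x + 1) - t - (max (-1) (x - 1) - t)
      = min 1 (x + 1) - max (-1) (x - 1) by ring]
  rcases le_total x 0 with h | h
  · rw [min_eq_right (by linarith : x + 1 ≤ 1), max_eq_left (by linarith : x - 1 ≤ -1),
      min_eq_right (by linarith : 2 + x ≤ 2 - x), max_comm]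
    congr 1; ring
  · rw [min_eq_left (by linarith : (1:ℝ) ≤ x + 1), max_eq_right (by linarith : (-1:ℝ) ≤ x - 1),
      min_eq_left (by linarith : 2 - x ≤ 2 + x), max_comm]
    congr 1; ring

lemma ind_shift (a t τ₁ : ℝ) :
    Set.indicator (Set.Icc (-1 : ℝ) 1) (fun _ => (1:ℝ)) (τ₁ + t)
      = Set.indicator (Set.Icc (-1 - t) (1 - t)) (fun _ => (1:ℝ)) τ₁ := by
  simp only [Set.indicator_apply, Set.mem_Icc]
  refine if_congr ?_ rfl rfl
  constructor <;> rintro ⟨h1, h2⟩ <;> constructor <;> linarith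

lemma ind_shift' (c t τ₁ : ℝ) :
    Set.indicator (Set.Icc (-1 : ℝ) 1) (fun _ => (1:ℝ)) (c - τ₁ + t)
      = Set.indicator (Set.Icc (c + t - 1) (c + t + 1)) (fun _ => (1:ℝ)) τ₁ := by
  simp only [Set.indicator_apply, Set.mem_Icc]
  refine if_congr ?_ rfl rfl
  constructor <;> rintro ⟨h1, h2⟩ <;> constructor <;> linarith

lemma key_integral (t c : ℝ) :
    ∫ τ₁ : ℝ, (Set.indicator (Set.Icc (-1:ℝ) 1) (fun _ => (1:ℝ)) (τ₁ + t))
        * (Set.indicator (Set.Icc (-1:ℝ) 1) (fun _ => (1:ℝ)) (c - τ₁ + t))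
      = max 0 (min (2 - c - 2*t) (2 + c + 2*t)) := by
  have e : ∀ τ₁ : ℝ, (Set.indicator (Set.Icc (-1:ℝ) 1) (fun _ => (1:ℝ)) (τ₁ + t))
        * (Set.indicator (Set.Icc (-1:ℝ) 1) (fun _ => (1:ℝ)) (c - τ₁ + t))
      = Set.indicator (Set.Icc (max (-1 - t) (c + t - 1)) (min (1 - t) (c + t + 1)))
          (fun _ => (1:ℝ)) τ₁ := by
    intro τ₁
    rw [ind_shift (-1) t τ₁, ind_shift' c t τ₁, ← Set.inter_indicator_mul, ← Set.Icc_inter_Icc]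
    simp
  rw [integral_congr_ae (Filter.Eventually.of_forall e)]
  rw [MeasureTheory.integral_indicator_const (1:ℝ) measurableSet_Icc]
  rw [Real.volume_real_Icc, smul_eq_mul, mul_one]
  have := tri_eq (c + 2*t) t
  rw [show c + t + 1 = (c + 2*t) - t + 1 by ring, show c + t - 1 = (c + 2*t) - t - 1 by ring,
    this, show 2 - (c + 2*t) = 2 - c - 2*t by ring, show 2 + (c + 2*t) = 2 + c + 2*t by ring]
lemma Xnorm_single (s b : ℝ) (m : ℤ × ℤ) (g : ℝ → ℝ) (u : ℤ × ℤ → ℝ → ℂ)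
    (hu : ∀ τ, u m τ = ((g (τ + nsq m) : ℝ) : ℂ))
    (hz : ∀ n τ, n ≠ m → u n τ = 0) :
    Xnorm s b u = jap m ^ s * Real.sqrt (∫ x : ℝ, (jb x ^ b * |g x|) ^ 2) := by
  unfold Xnorm
  rw [tsum_eq_single m (by
    intro n hn
    have : ∀ τ : ℝ, (jap n ^ s * jb (τ + nsq n) ^ b * ‖u n τ‖) ^ 2 = 0 := by
      intro τ; rw [hz n τ hn]; simp
    rw [integral_congr_ae (Filter.Eventually.of_forall this), integral_zero])]
  have h1 : ∀ τ : ℝ, (jap m ^ s * jb (τ + nsq m) ^ b * ‖u m τ‖) ^ 2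
      = (jap m ^ s) ^ 2 * ((jb (τ + nsq m) ^ b * |g (τ + nsq m)|) ^ 2) := by
    intro τ; rw [hu τ, Complex.norm_real, Real.norm_eq_abs]; ring
  rw [integral_congr_ae (Filter.Eventually.of_forall h1), integral_const_mul]
  have h2 : (∫ τ : ℝ, (jb (τ + nsq m) ^ b * |g (τ + nsq m)|) ^ 2)
      = ∫ x : ℝ, (jb x ^ b * |g x|) ^ 2 :=
    integral_add_right_eq_self (fun x => (jb x ^ b * |g x|) ^ 2) (nsq m)
  have hj : (0:ℝ) ≤ jap m ^ s := Real.rpow_nonneg (Real.sqrt_nonneg _) s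
  rw [h2, Real.sqrt_mul (sq_nonneg _), Real.sqrt_sq hj]

lemma jb_pos (x : ℝ) : 0 < jb x := Real.sqrt_pos.2 (by positivity)
lemma jb_ge_one (x : ℝ) : 1 ≤ jb x := by
  rw [show (1:ℝ) = Real.sqrt 1 by simp [Real.sqrt_one]]
  exact Real.sqrt_le_sqrt (by nlinarith)
lemma jb_le_sqrt2 {x : ℝ} (hx : x ∈ Icc (-1:ℝ) 1) : jb x ≤ Real.sqrt 2 := by
  apply Real.sqrt_le_sqrt
  rcases hx with ⟨h1, h2⟩; nlinarith
lemma jb_continuous : Continuous jb :=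
  Real.continuous_sqrt.comp (by continuity)

noncomputable def c0 (β : ℝ) : ℝ := min 1 (Real.sqrt 2 ^ β)
lemma c0_pos (β : ℝ) : 0 < c0 β :=
  lt_min one_pos (Real.rpow_pos_of_pos (by positivity) β)
lemma jb_rpow_lb (β : ℝ) {x : ℝ} (hx : x ∈ Icc (-1:ℝ) 1) : c0 β ≤ jb x ^ β := by
  rcases le_total 0 β with hβ | hβ
  · exact le_trans (min_le_left _ _) (Real.one_le_rpow (jb_ge_one x) hβ)
  · exact le_trans (min_le_right _ _) (Real.rpow_le_rpow_of_nonpos (jb_pos x) (jb_le_sqrt2 hx) hβ)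

lemma jb_rpow_continuous (β : ℝ) : Continuous (fun x => jb x ^ β) :=
  jb_continuous.rpow_const (fun x => Or.inl (ne_of_gt (jb_pos x)))

noncomputable def T (x : ℝ) : ℝ := max 0 (min (2 - x) (2 + x))
lemma T_nonneg (x : ℝ) : 0 ≤ T x := le_max_left _ _
lemma T_continuous : Continuous T := by
  exact continuous_const.max ((continuous_const.sub continuous_id).min (continuous_const.add continuous_id))
lemma T_zero {x : ℝ} (hx : x ∉ Icc (-2:ℝ) 2) : T x = 0 := by
  simp only [mem_Icc, not_and_or, not_le] at hx
  unfold T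
  rcases hx with h | h
  · rw [min_eq_right (by linarith), max_eq_left (by linarith)]
  · rw [min_eq_left (by linarith), max_eq_left (by linarith)]
lemma T_ge_one {x : ℝ} (hx : x ∈ Icc (-1:ℝ) 1) : 1 ≤ T x := by
  rcases hx with ⟨h1, h2⟩
  exact le_max_of_le_right (le_min (by linarith) (by linarith))

noncomputable def Ku (b : ℝ) : ℝ :=
  ∫ x : ℝ, (jb x ^ b * |Set.indicator (Set.Icc (-1:ℝ) 1) (fun _ => (1:ℝ)) x|) ^ 2
noncomputable def Kc (β : ℝ) : ℝ := ∫ x : ℝ, (jb x ^ β * |T x|) ^ 2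

lemma Ku_integrand_eq (b : ℝ) :
    (fun x => (jb x ^ b * |Set.indicator (Set.Icc (-1:ℝ) 1) (fun _ => (1:ℝ)) x|) ^ 2)
      = Set.indicator (Set.Icc (-1:ℝ) 1) (fun x => (jb x ^ b) ^ 2) := by
  funext x
  by_cases hx : x ∈ Icc (-1:ℝ) 1
  · rw [Set.indicator_of_mem hx, Set.indicator_of_mem hx]; simp
  · rw [Set.indicator_of_notMem hx, Set.indicator_of_notMem hx]; simp

lemma Ku_integrable (b : ℝ) :
    Integrable (fun x => (jb x ^ b * |Set.indicator (Set.Icc (-1:ℝ) 1) (fun _ => (1:ℝ)) x|) ^ 2) := by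
  rw [Ku_integrand_eq]
  rw [integrable_indicator_iff measurableSet_Icc]
  exact ((jb_rpow_continuous b).pow 2).continuousOn.integrableOn_compact isCompact_Icc

lemma Kc_integrand_eq (β : ℝ) :
    (fun x => (jb x ^ β * |T x|) ^ 2)
      = Set.indicator (Set.Icc (-2:ℝ) 2) (fun x => (jb x ^ β * |T x|) ^ 2) := by
  funext x
  by_cases hx : x ∈ Icc (-2:ℝ) 2
  · rw [Set.indicator_of_mem hx]
  · rw [Set.indicator_of_notMem hx, T_zero hx]; simp

lemma Kc_integrable (β : ℝ) : Integrable (fun x => (jb x ^ β * |T x|) ^ 2) := by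
  rw [Kc_integrand_eq]
  rw [integrable_indicator_iff measurableSet_Icc]
  exact (((jb_rpow_continuous β).mul T_continuous.abs).pow 2).continuousOn.integrableOn_compact
    isCompact_Icc

lemma integral_pos_aux {f : ℝ → ℝ} (hf : Integrable f) (hnn : ∀ x, 0 ≤ f x) {c : ℝ}
    (hc : 0 < c) (hlb : ∀ x ∈ Icc (-1:ℝ) 1, c ≤ f x) : 0 < ∫ x, f x := by
  have h1 : ∫ x in Icc (-1:ℝ) 1, c ≤ ∫ x in Icc (-1:ℝ) 1, f x := by
    apply setIntegral_mono_on _ hf.integrableOn measurableSet_Icc (fun x hx => hlb x hx)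
    exact integrableOn_const (by rw [Real.volume_Icc]; norm_num)
  have h2 : (∫ x in Icc (-1:ℝ) 1, c) = 2 * c := by
    rw [setIntegral_const, Real.volume_real_Icc, smul_eq_mul]
    norm_num
  have h3 : ∫ x in Icc (-1:ℝ) 1, f x ≤ ∫ x, f x :=
    setIntegral_le_integral hf (Filter.Eventually.of_forall hnn)
  nlinarith
lemma Ku_pos (b : ℝ) : 0 < Ku b := by
  apply integral_pos_aux (Ku_integrable b) (fun x => sq_nonneg _) (c := (c0 b) ^ 2)
    (pow_pos (c0_pos b) 2)
  intro x hx
  have h1 : c0 b ≤ jb x ^ b := jb_rpow_lb b hx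
  have h2 : (jb x ^ b * |Set.indicator (Set.Icc (-1:ℝ) 1) (fun _ => (1:ℝ)) x|) = jb x ^ b := by
    rw [Set.indicator_of_mem hx]; simp
  rw [h2]
  exact pow_le_pow_left₀ (c0_pos b).le h1 2

lemma Kc_pos (β : ℝ) : 0 < Kc β := by
  apply integral_pos_aux (Kc_integrable β) (fun x => sq_nonneg _) (c := (c0 β) ^ 2)
    (pow_pos (c0_pos β) 2)
  intro x hx
  have h1 : c0 β ≤ jb x ^ β := jb_rpow_lb β hx
  have h3 : (1:ℝ) ≤ |T x| := by rw [abs_of_nonneg (T_nonneg x)]; exact T_ge_one hx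
  have : c0 β * 1 ≤ jb x ^ β * |T x| :=
    mul_le_mul h1 h3 zero_le_one (le_trans (c0_pos β).le h1)
  rw [mul_one] at this
  exact pow_le_pow_left₀ (c0_pos β).le this 2

lemma rpow_sandwich (s : ℝ) {x y : ℝ} (hy : 0 < y) (h1 : y ≤ x) (h2 : x ≤ Real.sqrt 3 * y) :
    min 1 (Real.sqrt 3 ^ s) * y ^ s ≤ x ^ s ∧ x ^ s ≤ max 1 (Real.sqrt 3 ^ s) * y ^ s := by
  have hx : 0 < x := lt_of_lt_of_le hy h1
  have h3 : (0:ℝ) < Real.sqrt 3 := by positivity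
  have hys : (0:ℝ) ≤ y ^ s := Real.rpow_nonneg hy.le s
  have hmul : (Real.sqrt 3 * y) ^ s = Real.sqrt 3 ^ s * y ^ s :=
    Real.mul_rpow h3.le hy.le
  rcases le_total 0 s with hs | hs
  · constructor
    · calc min 1 (Real.sqrt 3 ^ s) * y ^ s ≤ 1 * y ^ s :=
            mul_le_mul_of_nonneg_right (min_le_left _ _) hys
        _ = y ^ s := one_mul _
        _ ≤ x ^ s := Real.rpow_le_rpow hy.le h1 hs
    · calc x ^ s ≤ (Real.sqrt 3 * y) ^ s := Real.rpow_le_rpow hx.le h2 hs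
        _ = Real.sqrt 3 ^ s * y ^ s := hmul
        _ ≤ max 1 (Real.sqrt 3 ^ s) * y ^ s :=
            mul_le_mul_of_nonneg_right (le_max_right _ _) hys
  · constructor
    · calc min 1 (Real.sqrt 3 ^ s) * y ^ s ≤ Real.sqrt 3 ^ s * y ^ s :=
            mul_le_mul_of_nonneg_right (min_le_right _ _) hys
        _ = (Real.sqrt 3 * y) ^ s := hmul.symm
        _ ≤ x ^ s := Real.rpow_le_rpow_of_nonpos hx h2 hs
    · calc x ^ s ≤ y ^ s := Real.rpow_le_rpow_of_nonpos hy h1 hs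
        _ = 1 * y ^ s := (one_mul _).symm
        _ ≤ max 1 (Real.sqrt 3 ^ s) * y ^ s :=
            mul_le_mul_of_nonneg_right (le_max_left _ _) hys

lemma low_high {m1 M1 ys xs k kmin kmax : ℝ}
    (h1 : m1 * ys ≤ xs) (h2 : xs ≤ M1 * ys) (hys : 0 ≤ ys) (hxs : 0 ≤ xs)
    (hkmin : 0 ≤ kmin) (hkk : kmin ≤ k) (hK : k ≤ kmax) (hm1 : 0 ≤ m1) :
    (m1 * kmin) * ys ≤ xs * k ∧ xs * k ≤ (M1 * kmax) * ys := by
  constructor <;> nlinarith [mul_nonneg hys hkmin, mul_nonneg hxs (le_trans hkmin hkk)]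
lemma conv_eq (N : ℕ) (n : ℤ × ℤ) (τ : ℝ) :
    conv (uN N) (vN N) n τ
      = if n = ((N : ℤ), (N : ℤ)) then
          ((max 0 (min (2 - τ - 2 * (N : ℝ) ^ 2) (2 + τ + 2 * (N : ℝ) ^ 2)) : ℝ) : ℂ)
        else 0 := by
  unfold conv
  rw [tsum_eq_single ((N : ℤ), (0:ℤ)) (by
    intro n₁ hne
    simp [uN, hne])]
  by_cases hn : n = ((N : ℤ), (N : ℤ))
  · subst hn
    have hsub : ((N : ℤ), (N : ℤ)) - ((N : ℤ), (0:ℤ)) = ((0:ℤ), (N:ℤ)) := by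
      simp [Prod.ext_iff]
    rw [hsub, if_pos rfl]
    simp only [uN, vN, eq_self_iff_true, if_true]
    rw [show (∫ τ₁ : ℝ,
        ((Set.indicator (Set.Icc (-1 : ℝ) 1) (fun _ => (1 : ℝ)) (τ₁ + (N : ℝ) ^ 2) : ℝ) : ℂ)
        * ((Set.indicator (Set.Icc (-1 : ℝ) 1) (fun _ => (1 : ℝ)) (τ - τ₁ + (N : ℝ) ^ 2) : ℝ) : ℂ))
      = ∫ τ₁ : ℝ, (((Set.indicator (Set.Icc (-1 : ℝ) 1) (fun _ => (1 : ℝ)) (τ₁ + (N : ℝ) ^ 2))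
        * (Set.indicator (Set.Icc (-1 : ℝ) 1) (fun _ => (1 : ℝ)) (τ - τ₁ + (N : ℝ) ^ 2)) : ℝ) : ℂ)
      from by push_cast; rfl]
    have horeal : (∫ τ₁ : ℝ, (((Set.indicator (Set.Icc (-1 : ℝ) 1) (fun _ => (1 : ℝ)) (τ₁ + (N : ℝ) ^ 2))
        * (Set.indicator (Set.Icc (-1 : ℝ) 1) (fun _ => (1 : ℝ)) (τ - τ₁ + (N : ℝ) ^ 2)) : ℝ) : ℂ))
      = Complex.ofReal (∫ τ₁ : ℝ, (Set.indicator (Set.Icc (-1 : ℝ) 1) (fun _ => (1 : ℝ)) (τ₁ + (N : ℝ) ^ 2))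
        * (Set.indicator (Set.Icc (-1 : ℝ) 1) (fun _ => (1 : ℝ)) (τ - τ₁ + (N : ℝ) ^ 2))) :=
      integral_ofReal
    rw [horeal, key_integral ((N:ℝ)^2) τ]
  · have hsub : n - ((N : ℤ), (0:ℤ)) ≠ ((0:ℤ), (N:ℤ)) := by
      intro h
      apply hn
      have h1 := congrArg Prod.fst h
      have h2 := congrArg Prod.snd h
      simp at h1 h2
      cases n
      simp_all [Prod.ext_iff]
      omega
    rw [if_neg hn]
    simp [vN, hsub]

/-- `𝓕(u_N v_N)(n,τ) = 1_{n=N(e₁+e₂)} max{0, min{2-τ-2N², 2+τ+2N²}}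
≥ 1_{n=N(e₁+e₂)} 1_{[-1,1]}(τ+2N²)`, and for any `s, b`,
`‖u_N‖_{X^{s,b}} ∼ ‖v_N‖_{X^{s,b}} ∼ ‖⟨n⟩^s⟨τ+|n|²⟩^{b-1}𝓕(u_N v_N)‖_{ℓ²L²} ∼ N^s`. -/
theorem stmt6 (s b : ℝ) :
    ∃ c C : ℝ, 0 < c ∧ 0 < C ∧ ∀ N : ℕ, 1 ≤ N →
      (∀ (n : ℤ × ℤ) (τ : ℝ),
        conv (uN N) (vN N) n τ
          = if n = ((N : ℤ), (N : ℤ)) then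
              ((max 0 (min (2 - τ - 2 * (N : ℝ) ^ 2) (2 + τ + 2 * (N : ℝ) ^ 2)) : ℝ) : ℂ)
            else 0)
      ∧ (∀ (n : ℤ × ℤ) (τ : ℝ),
        (if n = ((N : ℤ), (N : ℤ)) then
            Set.indicator (Set.Icc (-1 : ℝ) 1) (fun _ => (1 : ℝ)) (τ + 2 * (N : ℝ) ^ 2)
          else 0)
        ≤ ‖conv (uN N) (vN N) n τ‖)
      ∧ c * (N : ℝ) ^ s ≤ Xnorm s b (uN N) ∧ Xnorm s b (uN N) ≤ C * (N : ℝ) ^ s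
      ∧ c * (N : ℝ) ^ s ≤ Xnorm s b (vN N) ∧ Xnorm s b (vN N) ≤ C * (N : ℝ) ^ s
      ∧ c * (N : ℝ) ^ s ≤ Xnorm s (b - 1) (conv (uN N) (vN N))
      ∧ Xnorm s (b - 1) (conv (uN N) (vN N)) ≤ C * (N : ℝ) ^ s := by
  refine ⟨min 1 (Real.sqrt 3 ^ s) * min (Real.sqrt (Ku b)) (Real.sqrt (Kc (b-1))),
    max 1 (Real.sqrt 3 ^ s) * max (Real.sqrt (Ku b)) (Real.sqrt (Kc (b-1))), ?_, ?_, ?_⟩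
  · apply mul_pos (lt_min one_pos (Real.rpow_pos_of_pos (by positivity) s))
    exact lt_min (Real.sqrt_pos.2 (Ku_pos b)) (Real.sqrt_pos.2 (Kc_pos (b-1)))
  · apply mul_pos (lt_of_lt_of_le one_pos (le_max_left _ _))
    exact lt_of_lt_of_le (Real.sqrt_pos.2 (Ku_pos b)) (le_max_left _ _)
  intro N hN
  have hN1 : (1:ℝ) ≤ (N:ℝ) := by exact_mod_cast hN
  have hNpos : (0:ℝ) < (N:ℝ) := by linarith
  -- jap bounds
  have hjap_u : (N:ℝ) ≤ jap ((N:ℤ), 0) ∧ jap ((N:ℤ), 0) ≤ Real.sqrt 3 * (N:ℝ) := by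
    have he : jap ((N:ℤ), (0:ℤ)) = Real.sqrt (1 + (N:ℝ)^2) := by
      unfold jap; push_cast; norm_num
    constructor
    · rw [he]; exact Real.le_sqrt_of_sq_le (by nlinarith)
    · rw [he, show Real.sqrt 3 * (N:ℝ) = Real.sqrt (3 * (N:ℝ)^2) from by
        rw [Real.sqrt_mul (by norm_num), Real.sqrt_sq hNpos.le]]
      exact Real.sqrt_le_sqrt (by nlinarith)
  have hjap_v : (N:ℝ) ≤ jap (0, (N:ℤ)) ∧ jap (0, (N:ℤ)) ≤ Real.sqrt 3 * (N:ℝ) := by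
    have he : jap ((0:ℤ), (N:ℤ)) = jap ((N:ℤ), (0:ℤ)) := by unfold jap; push_cast; ring_nf
    rw [he]; exact hjap_u
  have hjap_c : (N:ℝ) ≤ jap ((N:ℤ), (N:ℤ)) ∧ jap ((N:ℤ), (N:ℤ)) ≤ Real.sqrt 3 * (N:ℝ) := by
    have he : jap ((N:ℤ), (N:ℤ)) = Real.sqrt (1 + ((N:ℝ)^2 + (N:ℝ)^2)) := by
      unfold jap; push_cast; norm_num
    constructor
    · rw [he]; exact Real.le_sqrt_of_sq_le (by nlinarith)
    · rw [he, show Real.sqrt 3 * (N:ℝ) = Real.sqrt (3 * (N:ℝ)^2) from by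
        rw [Real.sqrt_mul (by norm_num), Real.sqrt_sq hNpos.le]]
      exact Real.sqrt_le_sqrt (by nlinarith)
  have hsand_u := rpow_sandwich s hNpos hjap_u.1 hjap_u.2
  have hsand_v := rpow_sandwich s hNpos hjap_v.1 hjap_v.2
  have hsand_c := rpow_sandwich s hNpos hjap_c.1 hjap_c.2
  -- Xnorm identities
  have hXu : Xnorm s b (uN N) = jap ((N:ℤ), 0) ^ s * Real.sqrt (Ku b) := by
    apply Xnorm_single s b ((N:ℤ), (0:ℤ))
      (fun x => Set.indicator (Set.Icc (-1:ℝ) 1) (fun _ => (1:ℝ)) x) (uN N)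
    · intro τ
      have : τ + nsq ((N:ℤ), (0:ℤ)) = τ + (N:ℝ)^2 := by unfold nsq; push_cast; ring
      rw [this]; simp [uN]
    · intro n τ hn; simp [uN, hn]
  have hXv : Xnorm s b (vN N) = jap ((0:ℤ), (N:ℤ)) ^ s * Real.sqrt (Ku b) := by
    apply Xnorm_single s b ((0:ℤ), (N:ℤ))
      (fun x => Set.indicator (Set.Icc (-1:ℝ) 1) (fun _ => (1:ℝ)) x) (vN N)
    · intro τ
      have : τ + nsq ((0:ℤ), (N:ℤ)) = τ + (N:ℝ)^2 := by unfold nsq; push_cast; ring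
      rw [this]; simp [vN]
    · intro n τ hn; simp [vN, hn]
  have hXc : Xnorm s (b-1) (conv (uN N) (vN N))
      = jap ((N:ℤ), (N:ℤ)) ^ s * Real.sqrt (Kc (b-1)) := by
    apply Xnorm_single s (b-1) ((N:ℤ), (N:ℤ)) T (conv (uN N) (vN N))
    · intro τ
      rw [conv_eq N ((N:ℤ), (N:ℤ)) τ, if_pos rfl]
      have h1 : τ + nsq ((N:ℤ), (N:ℤ)) = τ + 2 * (N:ℝ)^2 := by unfold nsq; push_cast; ring
      rw [h1]
      unfold T
      norm_num
      congr 1 <;> ring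
    · intro n τ hn; rw [conv_eq N n τ, if_neg hn]
  have hNs : (0:ℝ) ≤ (N:ℝ) ^ s := Real.rpow_nonneg hNpos.le s
  have hkmin : (0:ℝ) ≤ min (Real.sqrt (Ku b)) (Real.sqrt (Kc (b-1))) :=
    le_min (Real.sqrt_nonneg _) (Real.sqrt_nonneg _)
  have hm1 : (0:ℝ) ≤ min 1 (Real.sqrt 3 ^ s) :=
    (lt_min one_pos (Real.rpow_pos_of_pos (by positivity) s)).le
  refine ⟨conv_eq N, ?_, ?_, ?_, ?_, ?_, ?_, ?_⟩
  · -- indicator lower bound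
    intro n τ
    rw [conv_eq N n τ]
    by_cases hn : n = ((N:ℤ), (N:ℤ))
    · rw [if_pos hn, if_pos hn, Complex.norm_real, Real.norm_eq_abs,
        abs_of_nonneg (le_max_left _ _)]
      by_cases hτ : τ + 2 * (N:ℝ)^2 ∈ Icc (-1:ℝ) 1
      · rw [Set.indicator_of_mem hτ]
        rcases hτ with ⟨hl, hr⟩
        exact le_max_of_le_right (le_min (by linarith) (by linarith))
      · rw [Set.indicator_of_notMem hτ]
        exact le_max_left _ _
    · rw [if_neg hn, if_neg hn]; simp
  · rw [hXu]
    exact (low_high (kmin := min (Real.sqrt (Ku b)) (Real.sqrt (Kc (b-1)))) (kmax := max (Real.sqrt (Ku b)) (Real.sqrt (Kc (b-1)))) hsand_u.1 hsand_u.2 hNs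
      (Real.rpow_nonneg (Real.sqrt_nonneg _) s) hkmin (min_le_left _ _)
      (le_max_left _ _) hm1).1
  · rw [hXu]
    exact (low_high (kmin := min (Real.sqrt (Ku b)) (Real.sqrt (Kc (b-1)))) (kmax := max (Real.sqrt (Ku b)) (Real.sqrt (Kc (b-1)))) hsand_u.1 hsand_u.2 hNs
      (Real.rpow_nonneg (Real.sqrt_nonneg _) s) hkmin (min_le_left _ _)
      (le_max_left _ _) hm1).2
  · rw [hXv]
    exact (low_high (kmin := min (Real.sqrt (Ku b)) (Real.sqrt (Kc (b-1)))) (kmax := max (Real.sqrt (Ku b)) (Real.sqrt (Kc (b-1)))) hsand_v.1 hsand_v.2 hNs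
      (Real.rpow_nonneg (Real.sqrt_nonneg _) s) hkmin (min_le_left _ _)
      (le_max_left _ _) hm1).1
  · rw [hXv]
    exact (low_high (kmin := min (Real.sqrt (Ku b)) (Real.sqrt (Kc (b-1)))) (kmax := max (Real.sqrt (Ku b)) (Real.sqrt (Kc (b-1)))) hsand_v.1 hsand_v.2 hNs
      (Real.rpow_nonneg (Real.sqrt_nonneg _) s) hkmin (min_le_left _ _)
      (le_max_left _ _) hm1).2
  · rw [hXc]
    exact (low_high (kmin := min (Real.sqrt (Ku b)) (Real.sqrt (Kc (b-1)))) (kmax := max (Real.sqrt (Ku b)) (Real.sqrt (Kc (b-1)))) hsand_c.1 hsand_c.2 hNs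
      (Real.rpow_nonneg (Real.sqrt_nonneg _) s) hkmin (min_le_right _ _)
      (le_max_right _ _) hm1).1
  · rw [hXc]
    exact (low_high (kmin := min (Real.sqrt (Ku b)) (Real.sqrt (Kc (b-1)))) (kmax := max (Real.sqrt (Ku b)) (Real.sqrt (Kc (b-1)))) hsand_c.1 hsand_c.2 hNs
      (Real.rpow_nonneg (Real.sqrt_nonneg _) s) hkmin (min_le_right _ _)
      (le_max_right _ _) hm1).2
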